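/- Let T1 and T2 be rooted binary phylogenetic trees on the same taxon set X, and let f be an optimal character for d_MP(T1,T2) such that l_f(T1) < l_f(T2). Suppose T1 contains two cherries (a,b) and (c,d) and that in T2 the cherries (a,c) and (b,d) appear under a common parent (a double cherry). Then there exists an optimal character f'' such that f''(a) = f''(b), f''(c) = f''(d), f''(a) ≠ f''(c), and f'' agrees with f on all taxa other than a, b, c, d. -/

import Mathlib

namespace MPDist

/-- A rooted binary phylogenetic tree: leaves are labelled by taxa,
every internal vertex (including the root) has exactly two children. -/
inductive PTree (X : Type) : Type
  | leaf : X → PTree X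
  | node : PTree X → PTree X → PTree X

namespace PTree

/-- The list of leaf labels (taxa) of a tree. -/
def leaves {X : Type} : PTree X → List X
  | .leaf x => [x]
  | .node l r => l.leaves ++ r.leaves

/-- Relabelling of taxa. -/
def map {X Y : Type} (φ : X → Y) : PTree X → PTree Y
  | .leaf x => .leaf (φ x)
  | .node l r => .node (l.map φ) (r.map φ)

end PTree

/-- `T` is a phylogenetic tree on the taxon set `X`:
its leaves are bijectively labelled by the elements of `X`. -/
def IsPhylo {X : Type} (T : PTree X) : Prop :=
  T.leaves.Nodup ∧ ∀ x : X, x ∈ T.leaves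

/-- A state-labelled binary tree (an extension assigns a state to every vertex). -/
inductive ETree (C : Type) : Type
  | leaf : C → ETree C
  | node : C → ETree C → ETree C → ETree C

namespace ETree

/-- The state at the root. -/
def root {C : Type} : ETree C → C
  | .leaf c => c
  | .node c _ _ => c

/-- The number of edges `{u,v}` with different states at the two endpoints
(substitutions/mutations). -/
def changes {C : Type} [DecidableEq C] : ETree C → ℕ
  | .leaf _ => 0
  | .node c l r =>
      ((if l.root = c then 0 else 1) + (if r.root = c then 0 else 1)) +
        (l.changes + r.changes)

end ETree

/-- `g` is an extension of the character `f` to the tree `T`: it has the same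
shape as `T`, assigns a state to every vertex, and agrees with `f` on the taxa. -/
inductive IsExtension {X C : Type} (f : X → C) : PTree X → ETree C → Prop
  | leaf (x : X) : IsExtension f (.leaf x) (.leaf (f x))
  | node {l r : PTree X} {gl gr : ETree C} (c : C) :
      IsExtension f l gl → IsExtension f r gr →
      IsExtension f (.node l r) (.node c gl gr)

/-- The parsimony score `l_f(T)`: the minimum number of mutation edges
over all extensions of `f` to `T`. -/
noncomputable def pscore {X C : Type} [DecidableEq C] (f : X → C) (T : PTree X) : ℕ :=
  sInf { k : ℕ | ∃ g : ETree C, IsExtension f T g ∧ g.changes = k }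

/-- The MP distance `d_MP(T1,T2) = max_f |l_f(T1) − l_f(T2)|`, the maximum taken
over all characters `f` on the taxon set (states drawn from `ℕ`). -/
noncomputable def dMP {X : Type} (T1 T2 : PTree X) : ℕ :=
  sSup { k : ℕ | ∃ f : X → ℕ, k = ((pscore f T1 : ℤ) - (pscore f T2 : ℤ)).natAbs }

/-- `d^i_MP(T1,T2)`: as `dMP`, but over characters using at most `i` states. -/
noncomputable def dMPk {X : Type} (i : ℕ) (T1 T2 : PTree X) : ℕ :=
  sSup { k : ℕ | ∃ f : X → Fin i, k = ((pscore f T1 : ℤ) - (pscore f T2 : ℤ)).natAbs }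

/-- `max_f (l_f(T2) − l_f(T1))` over all characters `f`. -/
noncomputable def maxDiff {X : Type} (T1 T2 : PTree X) : ℤ :=
  sSup { d : ℤ | ∃ f : X → ℕ, d = (pscore f T2 : ℤ) - (pscore f T1 : ℤ) }

/-- `max_f (l_f(T2) − l_f(T1))` over all characters `f` with at most `i` states. -/
noncomputable def maxDiffk {X : Type} (i : ℕ) (T1 T2 : PTree X) : ℤ :=
  sSup { d : ℤ | ∃ f : X → Fin i, d = (pscore f T2 : ℤ) - (pscore f T1 : ℤ) }

/-- `gap(T1,T2) = |max_f(l_f(T2)−l_f(T1)) − max_f(l_f(T1)−l_f(T2))|`. -/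
noncomputable def gap {X : Type} (T1 T2 : PTree X) : ℤ :=
  |maxDiff T1 T2 - maxDiff T2 T1|

/-- `gap` restricted to characters with at most `i` states. -/
noncomputable def gapk {X : Type} (i : ℕ) (T1 T2 : PTree X) : ℤ :=
  |maxDiffk i T1 T2 - maxDiffk i T2 T1|

/-- `s` occurs as a (rooted) subtree of `t`. -/
inductive IsSubtree {X : Type} : PTree X → PTree X → Prop
  | refl (t : PTree X) : IsSubtree t t
  | left {s l r : PTree X} : IsSubtree s l → IsSubtree s (.node l r)
  | right {s l r : PTree X} : IsSubtree s r → IsSubtree s (.node l r)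

/-- Taxa `a`, `b` form a cherry of `T`: they are leaves with a common parent. -/
def IsCherry {X : Type} (T : PTree X) (a b : X) : Prop :=
  IsSubtree (.node (.leaf a) (.leaf b)) T

/-- Relabel a tree on taxa `ℕ` by shifting all labels up by `s` (fresh copies). -/
def shiftT (s : ℕ) (T : PTree ℕ) : PTree ℕ := T.map (fun x => x + s)

/-- `T_a = (((((2,3),4),5),6),1)` on taxa `{1,…,6}` (taxon `j` encoded as `j-1`). -/
def Ta6 : PTree ℕ :=
  .node (.node (.node (.node (.node (.leaf 1) (.leaf 2)) (.leaf 3)) (.leaf 4)) (.leaf 5)) (.leaf 0)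

/-- `T_b = ((((2,6),(3,4)),5),1)` on taxa `{1,…,6}` (taxon `j` encoded as `j-1`). -/
def Tb6 : PTree ℕ :=
  .node (.node (.node (.node (.leaf 1) (.leaf 5)) (.node (.leaf 2) (.leaf 3))) (.leaf 4)) (.leaf 0)

/-- `T_A`: two disjoint copies of `T_a` joined under a new root (12 taxa). -/
def TA12 : PTree ℕ := .node Ta6 (shiftT 6 Ta6)

/-- `T_B`: two disjoint copies of `T_b` joined under a new root (12 taxa). -/
def TB12 : PTree ℕ := .node Tb6 (shiftT 6 Tb6)

/-- `TkA k` is the tree `T^{k+1}_A`: `k+1` disjoint copies of `T_A` arranged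
along a caterpillar backbone (so `TkA 0 = T^1_A = T_A`). -/
def TkA : ℕ → PTree ℕ
  | 0 => TA12
  | k+1 => .node (TkA k) (shiftT (12*(k+1)) TA12)

/-- `TkB k` is the tree `T^{k+1}_B`. -/
def TkB : ℕ → PTree ℕ
  | 0 => TB12
  | k+1 => .node (TkB k) (shiftT (12*(k+1)) TB12)

/-- `T_a = (((5,(6,4)),3),((1,(8,2)),7))` on taxa `{1,…,8}` (taxon `j` encoded as `j-1`). -/
def Ta8 : PTree ℕ :=
  .node (.node (.node (.leaf 4) (.node (.leaf 5) (.leaf 3))) (.leaf 2))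
        (.node (.node (.leaf 0) (.node (.leaf 7) (.leaf 1))) (.leaf 6))

/-- `T_b = (((7,((4,2),6)),3),(8,(1,5)))` on taxa `{1,…,8}` (taxon `j` encoded as `j-1`). -/
def Tb8 : PTree ℕ :=
  .node (.node (.node (.leaf 6) (.node (.node (.leaf 3) (.leaf 1)) (.leaf 5))) (.leaf 2))
        (.node (.leaf 7) (.node (.leaf 0) (.leaf 4)))

/-- `T_A` (2-state construction): two disjoint copies of `T_a` under a new root (16 taxa). -/
def TA16 : PTree ℕ := .node Ta8 (shiftT 8 Ta8)

/-- `T_B` (2-state construction): two disjoint copies of `T_b` under a new root (16 taxa). -/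
def TB16 : PTree ℕ := .node Tb8 (shiftT 8 Tb8)

/-- `T_AA`: two disjoint copies of `T_A` under a new root (32 taxa). -/
def TAA : PTree ℕ := .node TA16 (shiftT 16 TA16)

/-- `T_BB`: two disjoint copies of `T_B` under a new root (32 taxa). -/
def TBB : PTree ℕ := .node TB16 (shiftT 16 TB16)

/-- `TkAA k` is the tree `T^{k+1}_AA` (so `TkAA 0 = T^1_AA = T_AA`). -/
def TkAA : ℕ → PTree ℕ
  | 0 => TAA
  | k+1 => .node (TkAA k) (shiftT (32*(k+1)) TAA)

/-- `TkBB k` is the tree `T^{k+1}_BB`. -/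
def TkBB : ℕ → PTree ℕ
  | 0 => TBB
  | k+1 => .node (TkBB k) (shiftT (32*(k+1)) TBB)


/-! ### Auxiliary machinery for the double cherry recolouring theorem -/

/-- indicator cost of an edge -/
def cst (u v : ℕ) : ℕ := if u = v then 0 else 1

def cst2 (s u v : ℕ) : ℕ := min (cst s u) (cst s v)

/-- Steiner cost of connecting states `p`, `q` to a root state `s`. -/
def st (s p q : ℕ) : ℕ := if p = q then cst s p else 1 + min (cst s p) (cst s q)

/-- optimal median state for `p,q` below root `s`. -/
def med (s p q : ℕ) : ℕ := if p = q then p else if s = q then s else p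

lemma cst_le_one (u v : ℕ) : cst u v ≤ 1 := by unfold cst; split <;> omega

lemma cst_self (u : ℕ) : cst u u = 0 := by simp [cst]

lemma cst_ne {u v : ℕ} (h : u ≠ v) : cst u v = 1 := by simp [cst, h]

lemma cst_tri (u v w : ℕ) : cst u w ≤ cst v w + cst v u := by
  unfold cst; split_ifs <;> omega

lemma cst_symm_le (u v : ℕ) : cst u v ≤ cst v u := by
  unfold cst; split_ifs <;> omega

lemma st_le (s p q : ℕ) : st s p q ≤ cst s p + cst s q := by
  unfold st cst; split_ifs <;> omega

lemma med_rep (s' p q : ℕ) :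
    cst (med s' p q) s' + (cst p (med s' p q) + cst q (med s' p q)) ≤ st s' p q := by
  unfold med st cst; split_ifs <;> omega

lemma low_bound {x' z' : ℕ} (hxz : x' ≠ z') (t s : ℕ) :
    1 + cst2 s x' z' ≤ cst t s + (cst x' t + cst z' t) := by
  unfold cst2 cst; split_ifs <;> omega

@[simp] lemma changes_node (c : ℕ) (l r : ETree ℕ) :
    (ETree.node c l r).changes = (cst l.root c + cst r.root c) + (l.changes + r.changes) := rfl

@[simp] lemma root_node (c : ℕ) (l r : ETree ℕ) : (ETree.node c l r).root = c := rfl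

@[simp] lemma root_leaf (c : ℕ) : (ETree.leaf c).root = c := rfl

@[simp] lemma changes_leaf (c : ℕ) : (ETree.leaf c).changes = 0 := rfl

/-- a canonical extension, witnessing nonemptiness -/
def canonExt {X : Type} (f : X → ℕ) : PTree X → ETree ℕ
  | .leaf x => .leaf (f x)
  | .node l r => .node (canonExt f l).root (canonExt f l) (canonExt f r)

lemma canonExt_isExtension {X : Type} (f : X → ℕ) : ∀ T : PTree X, IsExtension f T (canonExt f T)
  | .leaf x => IsExtension.leaf x
  | .node l r => IsExtension.node _ (canonExt_isExtension f l) (canonExt_isExtension f r)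

lemma pscore_le {X : Type} (f : X → ℕ) (T : PTree X) {g : ETree ℕ}
    (h : IsExtension f T g) : pscore f T ≤ g.changes :=
  Nat.sInf_le ⟨g, h, rfl⟩

lemma pscore_exists {X : Type} (f : X → ℕ) (T : PTree X) :
    ∃ g : ETree ℕ, IsExtension f T g ∧ g.changes = pscore f T := by
  have h : {k : ℕ | ∃ g : ETree ℕ, IsExtension f T g ∧ g.changes = k}.Nonempty :=
    ⟨(canonExt f T).changes, canonExt f T, canonExt_isExtension f T, rfl⟩
  exact Nat.sInf_mem h

lemma ext_congr {X : Type} {f f' : X → ℕ} : ∀ {T : PTree X} {g : ETree ℕ},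
    IsExtension f T g → (∀ x ∈ T.leaves, f x = f' x) → IsExtension f' T g := by
  intro T g hg
  induction hg with
  | leaf x =>
      intro hagree
      have hx : f x = f' x := hagree x (by simp [PTree.leaves])
      rw [hx]
      exact .leaf x
  | node c hl hr ihl ihr =>
      intro hagree
      exact .node c (ihl fun x hx => hagree x (by simp [PTree.leaves, hx]))
                    (ihr fun x hx => hagree x (by simp [PTree.leaves, hx]))

lemma IsSubtree.leaves_sublist {X : Type} {s t : PTree X} (h : IsSubtree s t) :
    s.leaves.Sublist t.leaves := by
  induction h with
  | refl => exact List.Sublist.refl _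
  | left h ih => exact ih.trans (List.sublist_append_left _ _)
  | right h ih => exact ih.trans (List.sublist_append_right _ _)
/-- Single cherry surgery: recolouring a cherry `(a,b)` to a common state `x'`.
`σ` is the state of the cherry's parent vertex in the given extension. -/
lemma cherry_surgery {X : Type} {a b : X} {h : X → ℕ} :
    ∀ {T : PTree X}, IsSubtree (.node (.leaf a) (.leaf b)) T → T.leaves.Nodup →
    ∀ {g : ETree ℕ}, IsExtension h T g →
    ∃ σ : ℕ, ∀ (x' : ℕ) (h' : X → ℕ), h' a = x' → h' b = x' →
      (∀ x ∈ T.leaves, x ≠ a → x ≠ b → h' x = h x) →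
      ∃ g' : ETree ℕ, IsExtension h' T g' ∧
        ((g'.root = g.root ∧
            g'.changes + (cst σ (h a) + cst σ (h b)) ≤ g.changes + cst σ x') ∨
         (g'.root = x' ∧ g.root = σ ∧
            g'.changes + (cst σ (h a) + cst σ (h b)) ≤ g.changes)) := by
  intro T hsub
  induction hsub with
  | refl =>
      intro _ g hg
      cases hg with
      | node σ hl hr =>
        cases hl; cases hr
        refine ⟨σ, fun x' h' ha' hb' _ => ?_⟩
        refine ⟨.node x' (.leaf x') (.leaf x'), ?_, Or.inr ⟨rfl, rfl, ?_⟩⟩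
        · exact IsExtension.node x' (ha' ▸ IsExtension.leaf a) (hb' ▸ IsExtension.leaf b)
        · simp only [changes_node, changes_leaf, root_leaf, cst]
          by_cases e1 : σ = h a <;> by_cases e2 : σ = h b <;> simp [e1, e2, eq_comm]
  | left hs ih =>
      rename_i l r
      intro hnd g hg
      cases hg with
      | node cg hgl hgr =>
        rename_i gl gr
        have hnd' : (l.leaves ++ r.leaves).Nodup := by simpa [PTree.leaves] using hnd
        obtain ⟨hndl, hndr, hdisj⟩ := List.nodup_append'.mp hnd'
        obtain ⟨σ, hσ⟩ := ih hndl hgl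
        refine ⟨σ, fun x' h' ha' hb' hoff => ?_⟩
        have hmema : a ∈ l.leaves := hs.leaves_sublist.subset (by simp [PTree.leaves])
        have hmemb : b ∈ l.leaves := hs.leaves_sublist.subset (by simp [PTree.leaves])
        obtain ⟨gl', hgl', hd⟩ := hσ x' h' ha' hb'
          (fun x hx hxa hxb => hoff x (by simp [PTree.leaves]; exact Or.inl hx) hxa hxb)
        have hgr' : IsExtension h' r gr := ext_congr hgr
          (fun x hx => (hoff x (by simp [PTree.leaves]; exact Or.inr hx)
            (fun he => hdisj hmema (he ▸ hx)) (fun he => hdisj hmemb (he ▸ hx))).symm)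
        refine ⟨.node cg gl' gr, IsExtension.node cg hgl' hgr', Or.inl ⟨rfl, ?_⟩⟩
        simp only [changes_node, root_node]
        rcases hd with ⟨hroot, hle⟩ | ⟨hroot', hglr, hle⟩
        · rw [hroot]; omega
        · have tri : cst x' cg ≤ cst σ cg + cst σ x' := cst_tri x' σ cg
          rw [hroot', hglr] at *
          omega
  | right hs ih =>
      rename_i l r
      intro hnd g hg
      cases hg with
      | node cg hgl hgr =>
        rename_i gl gr
        have hnd' : (l.leaves ++ r.leaves).Nodup := by simpa [PTree.leaves] using hnd
        obtain ⟨hndl, hndr, hdisj⟩ := List.nodup_append'.mp hnd'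
        obtain ⟨σ, hσ⟩ := ih hndr hgr
        refine ⟨σ, fun x' h' ha' hb' hoff => ?_⟩
        have hmema : a ∈ r.leaves := hs.leaves_sublist.subset (by simp [PTree.leaves])
        have hmemb : b ∈ r.leaves := hs.leaves_sublist.subset (by simp [PTree.leaves])
        obtain ⟨gr', hgr', hd⟩ := hσ x' h' ha' hb'
          (fun x hx hxa hxb => hoff x (by simp [PTree.leaves]; exact Or.inr hx) hxa hxb)
        have hgl' : IsExtension h' l gl := ext_congr hgl
          (fun x hx => (hoff x (by simp [PTree.leaves]; exact Or.inl hx)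
            (fun he => hdisj (he ▸ hx) hmema) (fun he => hdisj (he ▸ hx) hmemb)).symm)
        refine ⟨.node cg gl gr', IsExtension.node cg hgl' hgr', Or.inl ⟨rfl, ?_⟩⟩
        simp only [changes_node, root_node]
        rcases hd with ⟨hroot, hle⟩ | ⟨hroot', hgrr, hle⟩
        · rw [hroot]; omega
        · have tri : cst x' cg ≤ cst σ cg + cst σ x' := cst_tri x' σ cg
          rw [hroot', hgrr] at *
          omega
lemma side_combine {cg σ x' pa pb : ℕ} {gl gl' : ETree ℕ}
    (hd : (gl'.root = gl.root ∧ gl'.changes + (cst σ pa + cst σ pb) ≤ gl.changes + cst σ x') ∨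
          (gl'.root = x' ∧ gl.root = σ ∧ gl'.changes + (cst σ pa + cst σ pb) ≤ gl.changes)) :
    cst gl'.root cg + gl'.changes + (cst σ pa + cst σ pb) ≤
      cst gl.root cg + gl.changes + cst σ x' := by
  rcases hd with ⟨hroot, hle⟩ | ⟨h1, h2, hle⟩
  · rw [hroot]; omega
  · have tri : cst x' cg ≤ cst σ cg + cst σ x' := cst_tri x' σ cg
    rw [h1, h2] at *
    omega

/-- Two disjoint cherry surgeries at once. -/
lemma two_cherry_surgery {X : Type} {a b c d : X} {h : X → ℕ}
    (hac : a ≠ c) (had : a ≠ d) (hbc : b ≠ c) (hbd : b ≠ d) :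
    ∀ {T : PTree X}, T.leaves.Nodup →
      IsSubtree (.node (.leaf a) (.leaf b)) T → IsSubtree (.node (.leaf c) (.leaf d)) T →
      ∀ {g : ETree ℕ}, IsExtension h T g →
      ∃ σ1 σ2 : ℕ, ∀ (x' z' : ℕ) (h' : X → ℕ), h' a = x' → h' b = x' → h' c = z' → h' d = z' →
        (∀ x ∈ T.leaves, x ≠ a → x ≠ b → x ≠ c → x ≠ d → h' x = h x) →
        ∃ g' : ETree ℕ, IsExtension h' T g' ∧ g'.root = g.root ∧
          g'.changes + (cst σ1 (h a) + cst σ1 (h b) + (cst σ2 (h c) + cst σ2 (h d))) ≤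
            g.changes + (cst σ1 x' + cst σ2 z') := by
  intro T
  induction T with
  | leaf t =>
      intro _ h1 _ _ _
      have := h1.leaves_sublist.length_le
      simp [PTree.leaves] at this
  | node l r ihl ihr =>
      intro hnd h1 h2 g hg
      cases hg with
      | node cg hgl hgr =>
        rename_i gl gr
        have hnd' : (l.leaves ++ r.leaves).Nodup := by simpa [PTree.leaves] using hnd
        obtain ⟨hndl, hndr, hdisj⟩ := List.nodup_append'.mp hnd'
        cases h1 with
        | refl =>
            have hcmem : c ∈ (PTree.node (PTree.leaf a) (PTree.leaf b) : PTree X).leaves :=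
              h2.leaves_sublist.subset (by simp [PTree.leaves])
            simp [PTree.leaves] at hcmem
            rcases hcmem with h | h
            · exact absurd h.symm hac
            · exact absurd h.symm hbc
        | left hs1 =>
            cases h2 with
            | refl =>
                have := hs1.leaves_sublist.length_le
                simp [PTree.leaves] at this
            | left hs2 =>
                -- both cherries in l
                obtain ⟨σ1, σ2, hσ⟩ := ihl hndl hs1 hs2 hgl
                refine ⟨σ1, σ2, fun x' z' h' ha' hb' hc' hd' hoff => ?_⟩
                have hma : a ∈ l.leaves := hs1.leaves_sublist.subset (by simp [PTree.leaves])
                have hmb : b ∈ l.leaves := hs1.leaves_sublist.subset (by simp [PTree.leaves])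
                have hmc : c ∈ l.leaves := hs2.leaves_sublist.subset (by simp [PTree.leaves])
                have hmd : d ∈ l.leaves := hs2.leaves_sublist.subset (by simp [PTree.leaves])
                obtain ⟨gl', hgl', hroot, hle⟩ := hσ x' z' h' ha' hb' hc' hd'
                  (fun x hx hxa hxb hxc hxd =>
                    hoff x (by simp [PTree.leaves]; exact Or.inl hx) hxa hxb hxc hxd)
                have hgr' : IsExtension h' r gr := ext_congr hgr
                  (fun x hx => (hoff x (by simp [PTree.leaves]; exact Or.inr hx)
                    (fun he => hdisj hma (he ▸ hx)) (fun he => hdisj hmb (he ▸ hx))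
                    (fun he => hdisj hmc (he ▸ hx)) (fun he => hdisj hmd (he ▸ hx))).symm)
                refine ⟨.node cg gl' gr, IsExtension.node cg hgl' hgr', rfl, ?_⟩
                simp only [changes_node, root_node]
                rw [hroot]
                omega
            | right hs2 =>
                -- (a,b) in l, (c,d) in r
                obtain ⟨σ1, hσ1⟩ := cherry_surgery hs1 hndl hgl
                obtain ⟨σ2, hσ2⟩ := cherry_surgery hs2 hndr hgr
                refine ⟨σ1, σ2, fun x' z' h' ha' hb' hc' hd' hoff => ?_⟩
                have hma : a ∈ l.leaves := hs1.leaves_sublist.subset (by simp [PTree.leaves])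
                have hmb : b ∈ l.leaves := hs1.leaves_sublist.subset (by simp [PTree.leaves])
                have hmc : c ∈ r.leaves := hs2.leaves_sublist.subset (by simp [PTree.leaves])
                have hmd : d ∈ r.leaves := hs2.leaves_sublist.subset (by simp [PTree.leaves])
                obtain ⟨gl', hgl', hdl⟩ := hσ1 x' h' ha' hb'
                  (fun x hx hxa hxb => hoff x (by simp [PTree.leaves]; exact Or.inl hx) hxa hxb
                    (fun he => hdisj (he ▸ hx) hmc) (fun he => hdisj (he ▸ hx) hmd))
                obtain ⟨gr', hgr', hdr⟩ := hσ2 z' h' hc' hd'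
                  (fun x hx hxc hxd => hoff x (by simp [PTree.leaves]; exact Or.inr hx)
                    (fun he => hdisj hma (he ▸ hx)) (fun he => hdisj hmb (he ▸ hx)) hxc hxd)
                refine ⟨.node cg gl' gr', IsExtension.node cg hgl' hgr', rfl, ?_⟩
                simp only [changes_node, root_node]
                have c1 := side_combine (cg := cg) hdl
                have c2 := side_combine (cg := cg) hdr
                omega
        | right hs1 =>
            cases h2 with
            | refl =>
                have := hs1.leaves_sublist.length_le
                simp [PTree.leaves] at this
            | left hs2 =>
                -- (a,b) in r, (c,d) in l
                obtain ⟨σ1, hσ1⟩ := cherry_surgery hs1 hndr hgr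
                obtain ⟨σ2, hσ2⟩ := cherry_surgery hs2 hndl hgl
                refine ⟨σ1, σ2, fun x' z' h' ha' hb' hc' hd' hoff => ?_⟩
                have hma : a ∈ r.leaves := hs1.leaves_sublist.subset (by simp [PTree.leaves])
                have hmb : b ∈ r.leaves := hs1.leaves_sublist.subset (by simp [PTree.leaves])
                have hmc : c ∈ l.leaves := hs2.leaves_sublist.subset (by simp [PTree.leaves])
                have hmd : d ∈ l.leaves := hs2.leaves_sublist.subset (by simp [PTree.leaves])
                obtain ⟨gr', hgr', hdr⟩ := hσ1 x' h' ha' hb'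
                  (fun x hx hxa hxb => hoff x (by simp [PTree.leaves]; exact Or.inr hx) hxa hxb
                    (fun he => hdisj hmc (he ▸ hx)) (fun he => hdisj hmd (he ▸ hx)))
                obtain ⟨gl', hgl', hdl⟩ := hσ2 z' h' hc' hd'
                  (fun x hx hxc hxd => hoff x (by simp [PTree.leaves]; exact Or.inl hx)
                    (fun he => hdisj (he ▸ hx) hma) (fun he => hdisj (he ▸ hx) hmb) hxc hxd)
                refine ⟨.node cg gl' gr', IsExtension.node cg hgl' hgr', rfl, ?_⟩
                simp only [changes_node, root_node]
                have c1 := side_combine (cg := cg) hdr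
                have c2 := side_combine (cg := cg) hdl
                omega
            | right hs2 =>
                obtain ⟨σ1, σ2, hσ⟩ := ihr hndr hs1 hs2 hgr
                refine ⟨σ1, σ2, fun x' z' h' ha' hb' hc' hd' hoff => ?_⟩
                have hma : a ∈ r.leaves := hs1.leaves_sublist.subset (by simp [PTree.leaves])
                have hmb : b ∈ r.leaves := hs1.leaves_sublist.subset (by simp [PTree.leaves])
                have hmc : c ∈ r.leaves := hs2.leaves_sublist.subset (by simp [PTree.leaves])
                have hmd : d ∈ r.leaves := hs2.leaves_sublist.subset (by simp [PTree.leaves])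
                obtain ⟨gr', hgr', hroot, hle⟩ := hσ x' z' h' ha' hb' hc' hd'
                  (fun x hx hxa hxb hxc hxd =>
                    hoff x (by simp [PTree.leaves]; exact Or.inr hx) hxa hxb hxc hxd)
                have hgl' : IsExtension h' l gl := ext_congr hgl
                  (fun x hx => (hoff x (by simp [PTree.leaves]; exact Or.inl hx)
                    (fun he => hdisj (he ▸ hx) hma) (fun he => hdisj (he ▸ hx) hmb)
                    (fun he => hdisj (he ▸ hx) hmc) (fun he => hdisj (he ▸ hx) hmd)).symm)
                refine ⟨.node cg gl gr', IsExtension.node cg hgl' hgr', rfl, ?_⟩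
                simp only [changes_node, root_node]
                rw [hroot]
                omega
/-- Double cherry surgery on `T2`: replacing the recoloured double cherry
`((x',z'),(x',z'))` by the original states, with exact cost accounting. -/
lemma double_cherry_surgery {X : Type} {a b c d : X} {x' z' : ℕ} (hxz : x' ≠ z')
    {h'' : X → ℕ} (ha : h'' a = x') (hb : h'' b = x') (hc : h'' c = z') (hd : h'' d = z') :
    ∀ {T : PTree X},
      IsSubtree (.node (.node (.leaf a) (.leaf c)) (.node (.leaf b) (.leaf d))) T →
      T.leaves.Nodup →
      ∀ {g'' : ETree ℕ}, IsExtension h'' T g'' →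
      ∃ s : ℕ, ∀ (s' : ℕ) (h : X → ℕ),
        (∀ x ∈ T.leaves, x ≠ a → x ≠ b → x ≠ c → x ≠ d → h x = h'' x) →
        ∃ g : ETree ℕ, IsExtension h T g ∧
          ((g.root = g''.root ∧
             g.changes + (2 + 2 * cst2 s x' z') ≤
               g''.changes + (st s' (h a) (h c) + st s' (h b) (h d) + cst s s')) ∨
           (g.root = s' ∧ g''.root = s ∧
             g.changes + (2 + 2 * cst2 s x' z') ≤
               g''.changes + (st s' (h a) (h c) + st s' (h b) (h d)))) := by
  intro T hsub
  induction hsub with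
  | refl =>
      intro _ g'' hg
      cases hg with
      | node s hP1 hP2 =>
        cases hP1 with
        | node t1 hl1 hr1 =>
          cases hl1; cases hr1
          cases hP2 with
          | node t2 hl2 hr2 =>
            cases hl2; cases hr2
            refine ⟨s, fun s' h _ => ?_⟩
            refine ⟨.node s' (.node (med s' (h a) (h c)) (.leaf (h a)) (.leaf (h c)))
                            (.node (med s' (h b) (h d)) (.leaf (h b)) (.leaf (h d))),
                    ?_, Or.inr ⟨rfl, rfl, ?_⟩⟩
            · exact IsExtension.node s'
                (IsExtension.node _ (IsExtension.leaf a) (IsExtension.leaf c))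
                (IsExtension.node _ (IsExtension.leaf b) (IsExtension.leaf d))
            · have r1 := med_rep s' (h a) (h c)
              have r2 := med_rep s' (h b) (h d)
              have l1 := low_bound hxz t1 s
              have l2 := low_bound hxz t2 s
              simp only [changes_node, changes_leaf, root_node, root_leaf, ha, hb, hc, hd]
              omega
  | left hs ih =>
      rename_i l r
      intro hnd g'' hg
      cases hg with
      | node cg hgl hgr =>
        rename_i gl gr
        have hnd' : (l.leaves ++ r.leaves).Nodup := by simpa [PTree.leaves] using hnd
        obtain ⟨hndl, hndr, hdisj⟩ := List.nodup_append'.mp hnd'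
        obtain ⟨s, hσ⟩ := ih hndl hgl
        refine ⟨s, fun s' h hoff => ?_⟩
        have hma : a ∈ l.leaves := hs.leaves_sublist.subset (by simp [PTree.leaves])
        have hmb : b ∈ l.leaves := hs.leaves_sublist.subset (by simp [PTree.leaves])
        have hmc : c ∈ l.leaves := hs.leaves_sublist.subset (by simp [PTree.leaves])
        have hmd : d ∈ l.leaves := hs.leaves_sublist.subset (by simp [PTree.leaves])
        obtain ⟨gl', hgl', hdl⟩ := hσ s' h
          (fun x hx hxa hxb hxc hxd =>
            hoff x (by simp [PTree.leaves]; exact Or.inl hx) hxa hxb hxc hxd)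
        have hgr' : IsExtension h r gr := ext_congr hgr
          (fun x hx => (hoff x (by simp [PTree.leaves]; exact Or.inr hx)
            (fun he => hdisj hma (he ▸ hx)) (fun he => hdisj hmb (he ▸ hx))
            (fun he => hdisj hmc (he ▸ hx)) (fun he => hdisj hmd (he ▸ hx))).symm)
        refine ⟨.node cg gl' gr, IsExtension.node cg hgl' hgr', Or.inl ⟨rfl, ?_⟩⟩
        simp only [changes_node, root_node]
        rcases hdl with ⟨hroot, hle⟩ | ⟨h1, h2, hle⟩
        · rw [hroot]; omega
        · have tri : cst s' cg ≤ cst s cg + cst s s' := cst_tri s' s cg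
          rw [h1, h2] at *
          omega
  | right hs ih =>
      rename_i l r
      intro hnd g'' hg
      cases hg with
      | node cg hgl hgr =>
        rename_i gl gr
        have hnd' : (l.leaves ++ r.leaves).Nodup := by simpa [PTree.leaves] using hnd
        obtain ⟨hndl, hndr, hdisj⟩ := List.nodup_append'.mp hnd'
        obtain ⟨s, hσ⟩ := ih hndr hgr
        refine ⟨s, fun s' h hoff => ?_⟩
        have hma : a ∈ r.leaves := hs.leaves_sublist.subset (by simp [PTree.leaves])
        have hmb : b ∈ r.leaves := hs.leaves_sublist.subset (by simp [PTree.leaves])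
        have hmc : c ∈ r.leaves := hs.leaves_sublist.subset (by simp [PTree.leaves])
        have hmd : d ∈ r.leaves := hs.leaves_sublist.subset (by simp [PTree.leaves])
        obtain ⟨gr', hgr', hdr⟩ := hσ s' h
          (fun x hx hxa hxb hxc hxd =>
            hoff x (by simp [PTree.leaves]; exact Or.inr hx) hxa hxb hxc hxd)
        have hgl' : IsExtension h l gl := ext_congr hgl
          (fun x hx => (hoff x (by simp [PTree.leaves]; exact Or.inl hx)
            (fun he => hdisj (he ▸ hx) hma) (fun he => hdisj (he ▸ hx) hmb)
            (fun he => hdisj (he ▸ hx) hmc) (fun he => hdisj (he ▸ hx) hmd)).symm)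
        refine ⟨.node cg gl gr', IsExtension.node cg hgl' hgr', Or.inl ⟨rfl, ?_⟩⟩
        simp only [changes_node, root_node]
        rcases hdr with ⟨hroot, hle⟩ | ⟨h1, h2, hle⟩
        · rw [hroot]; omega
        · have tri : cst s' cg ≤ cst s cg + cst s s' := cst_tri s' s cg
          rw [h1, h2] at *
          omega

/-- if `f` is optimal with `l_f(T1) < l_f(T2)`, `T1` contains
cherries `(a,b)` and `(c,d)` and `T2` contains the double cherry
`((a,c),(b,d))`, then there is an optimal character `f''` with
`f''(a) = f''(b)`, `f''(c) = f''(d)`, `f''(a) ≠ f''(c)`, agreeing with `f`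
on all other taxa. -/
theorem double_cherry_recolouring {X : Type} (T1 T2 : PTree X)
    (h1 : IsPhylo T1) (h2 : IsPhylo T2) (f : X → ℕ) (a b c d : X)
    (hopt : ((pscore f T1 : ℤ) - (pscore f T2 : ℤ)).natAbs = dMP T1 T2)
    (hlt : pscore f T1 < pscore f T2)
    (hab : IsCherry T1 a b) (hcd : IsCherry T1 c d)
    (hdc : IsSubtree
      (.node (.node (.leaf a) (.leaf c)) (.node (.leaf b) (.leaf d))) T2) :
    ∃ f'' : X → ℕ,
      ((pscore f'' T1 : ℤ) - (pscore f'' T2 : ℤ)).natAbs = dMP T1 T2 ∧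
      f'' a = f'' b ∧ f'' c = f'' d ∧ f'' a ≠ f'' c ∧
      ∀ x : X, x ≠ a → x ≠ b → x ≠ c → x ≠ d → f'' x = f x := by
  classical
  -- distinctness of a, b, c, d
  have hndQ := hdc.leaves_sublist.nodup h2.1
  simp [PTree.leaves, List.nodup_cons, List.nodup_append] at hndQ
  obtain ⟨⟨hac, hab', had⟩, ⟨hcb, hcd'⟩, hbd⟩ := hndQ
  -- optimal extension of f on T1, and the two cherry parent states
  obtain ⟨g1, hg1, hg1c⟩ := pscore_exists f T1
  obtain ⟨σ1, σ2, hfam⟩ := two_cherry_surgery hac had (fun h => hcb h.symm) hbd h1.1 hab hcd hg1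
  -- the new colours: x' = σ1, z' as below
  obtain ⟨z', hz'⟩ : ∃ z' : ℕ, z' = if σ1 = σ2 then σ1 + 1 else σ2 := ⟨_, rfl⟩
  have hxz : σ1 ≠ z' := by
    rw [hz']; split_ifs with hσ
    · omega
    · exact hσ
  obtain ⟨f'', hf''⟩ : ∃ f'' : X → ℕ,
      f'' = fun t => if t = a ∨ t = b then σ1 else if t = c ∨ t = d then z' else f t := ⟨_, rfl⟩
  have hf''a : f'' a = σ1 := by rw [hf'']; exact if_pos (Or.inl rfl)
  have hf''b : f'' b = σ1 := by rw [hf'']; exact if_pos (Or.inr rfl)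
  have hf''c : f'' c = z' := by
    rw [hf'']
    show (if c = a ∨ c = b then σ1 else if c = c ∨ c = d then z' else f c) = z'
    rw [if_neg (by rintro (h | h); exacts [hac h.symm, hcb h]), if_pos (Or.inl rfl)]
  have hf''d : f'' d = z' := by
    rw [hf'']
    show (if d = a ∨ d = b then σ1 else if d = c ∨ d = d then z' else f d) = z'
    rw [if_neg (by rintro (h | h); exacts [had h.symm, hbd h.symm]), if_pos (Or.inr rfl)]
  have hf''off : ∀ x : X, x ≠ a → x ≠ b → x ≠ c → x ≠ d → f'' x = f x := by
    intro x hxa hxb hxc hxd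
    rw [hf'']
    show (if x = a ∨ x = b then σ1 else if x = c ∨ x = d then z' else f x) = f x
    rw [if_neg (by rintro (h | h); exacts [hxa h, hxb h]),
        if_neg (by rintro (h | h); exacts [hxc h, hxd h])]
  -- upper bound on pscore f'' T1
  obtain ⟨g1', hg1', hroot1, hb1⟩ := hfam σ1 z' f'' hf''a hf''b hf''c hf''d
    (fun x _ hxa hxb hxc hxd => hf''off x hxa hxb hxc hxd)
  have hself1 := cst_self σ1
  have hT1 : pscore f'' T1 + (cst σ1 (f a) + cst σ1 (f b) + (cst σ2 (f c) + cst σ2 (f d))) ≤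
      pscore f T1 + cst σ2 z' := by
    have hps := pscore_le f'' T1 hg1'
    omega
  -- lower bound on pscore f'' T2
  obtain ⟨g2, hg2, hg2c⟩ := pscore_exists f'' T2
  obtain ⟨s, hfam2⟩ := double_cherry_surgery hxz hf''a hf''b hf''c hf''d hdc h2.1 hg2
  obtain ⟨s', hs'⟩ : ∃ s' : ℕ, s' = if s = z' then σ2 else σ1 := ⟨_, rfl⟩
  obtain ⟨g, hge, hdV⟩ := hfam2 s' f
    (fun x _ hxa hxb hxc hxd => (hf''off x hxa hxb hxc hxd).symm)
  have hT2 : pscore f T2 + (2 + 2 * cst2 s σ1 z') ≤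
      pscore f'' T2 + (st s' (f a) (f c) + st s' (f b) (f d) + cst s s') := by
    have hps := pscore_le f T2 hge
    rcases hdV with ⟨_, hle⟩ | ⟨_, _, hle⟩ <;> omega
  -- the key combinatorial inequality
  have hγ : st s' (f a) (f c) + st s' (f b) (f d) + cst s s' + cst σ2 z' ≤
      2 + 2 * cst2 s σ1 z' +
        (cst σ1 (f a) + cst σ1 (f b) + (cst σ2 (f c) + cst σ2 (f d))) := by
    have e1 := cst_le_one σ1 (f a); have e2 := cst_le_one σ1 (f b)
    have e3 := cst_le_one σ1 (f c); have e4 := cst_le_one σ1 (f d)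
    have e5 := cst_le_one σ2 (f a); have e6 := cst_le_one σ2 (f b)
    have e7 := cst_le_one σ2 (f c); have e8 := cst_le_one σ2 (f d)
    by_cases hσ : σ1 = σ2
    · subst hσ
      have hs'1 : s' = σ1 := by rw [hs']; exact ite_self σ1
      have hst1 := st_le σ1 (f a) (f c)
      have hst2 := st_le σ1 (f b) (f d)
      have hcs := cst_le_one s σ1
      have hcz := cst_le_one σ1 z'
      rw [hs'1]
      omega
    · have hz'2 : z' = σ2 := by rw [hz', if_neg hσ]
      have hz0 : cst σ2 z' = 0 := by rw [hz'2]; exact cst_self σ2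
      by_cases hs2 : s = z'
      · have hs'2 : s' = σ2 := by rw [hs', if_pos hs2]
        have hc0 : cst s σ2 = 0 := by rw [hs2, hz'2]; exact cst_self σ2
        have hst1 := st_le σ2 (f a) (f c)
        have hst2 := st_le σ2 (f b) (f d)
        rw [hs'2]
        omega
      · have hs'1 : s' = σ1 := by rw [hs', if_neg hs2]
        have hst1 := st_le σ1 (f a) (f c)
        have hst2 := st_le σ1 (f b) (f d)
        by_cases hsx : s = σ1
        · have hc0 : cst s σ1 = 0 := by rw [hsx]; exact cst_self σ1
          rw [hs'1]
          omega
        · have hc2 : cst2 s σ1 z' = 1 := by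
            rw [cst2, cst_ne hsx, cst_ne hs2]; rfl
          have hcs := cst_le_one s σ1
          rw [hs'1]
          omega
  have key : pscore f T2 + pscore f'' T1 ≤ pscore f'' T2 + pscore f T1 := by omega
  -- optimality wrap-up
  have hBdd : BddAbove
      {k : ℕ | ∃ f0 : X → ℕ, k = ((pscore f0 T1 : ℤ) - (pscore f0 T2 : ℤ)).natAbs} := by
    by_contra hB
    have h0 : dMP T1 T2 = 0 := by
      unfold dMP
      rw [csSup_of_not_bddAbove hB]
      simp
    omega
  have hmem : ((pscore f'' T1 : ℤ) - (pscore f'' T2 : ℤ)).natAbs ∈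
      {k : ℕ | ∃ f0 : X → ℕ, k = ((pscore f0 T1 : ℤ) - (pscore f0 T2 : ℤ)).natAbs} :=
    ⟨f'', rfl⟩
  have hle2 : ((pscore f'' T1 : ℤ) - (pscore f'' T2 : ℤ)).natAbs ≤ dMP T1 T2 :=
    le_csSup hBdd hmem
  refine ⟨f'', by omega, by rw [hf''a, hf''b], by rw [hf''c, hf''d],
    by rw [hf''a, hf''c]; exact hxz, hf''off⟩

end MPDist
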